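/- Let G be a k-uniform hypergraph on vertex set V with |V| = n and suppose there exists an l-set L ⊆ V such that for every pair {x,y} ⊆ L, the number of edges of G containing both x and y exceeds m = (l + (k−2)·C(l,2)) · C(n, k−3). Then G contains a copy of H_l^{(k)} with core L, i.e., there exist edges D_{xy} ∈ G for each pair {x,y} ⊆ L such that x,y ∈ D_{xy} and the sets D_{xy} \ {x,y} are pairwise disjoint and disjoint from L. -/

import Mathlib

open Finset

/-- A `k`-uniform hypergraph: every edge has `k` vertices. -/
def IsUniform (k : ℕ) {V : Type*} (G : Finset (Finset V)) : Prop :=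
  ∀ e ∈ G, e.card = k

/-- The Turán-type hypergraph `T^{(k)}(n,l)`: partition `Fin n` into `l` almost equal
parts (residues mod `l`) and take all `k`-sets meeting each part in at most one vertex. -/
def turan (n l k : ℕ) : Finset (Finset (Fin n)) :=
  ((Finset.univ : Finset (Fin n)).powersetCard k).filter
    (fun e => (e.image (fun v : Fin n => v.val % l)).card = e.card)

/-- The complete `l`-partite `k`-graph determined by parts `P`. -/
def multipartite {n : ℕ} (k : ℕ) {l : ℕ} (P : Fin l → Finset (Fin n)) :
    Finset (Finset (Fin n)) :=
  ((Finset.univ : Finset (Fin n)).powersetCard k).filter (fun e => ∀ i, (e ∩ P i).card ≤ 1)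

/-- `G` contains a (not necessarily induced) copy of the pattern `H`. -/
def Contains {α β : Type*} [DecidableEq α] [DecidableEq β]
    (H : Finset (Finset α)) (G : Finset (Finset β)) : Prop :=
  ∃ φ : α → β, Set.InjOn φ ↑(H.sup id) ∧ ∀ e ∈ H, e.image φ ∈ G

/-- The `k`-graph `H_l^{(k)}`: the complete graph on core `{0,…,l-1}`, each edge
enlarged by a fresh set of `k-2` vertices, all enlarging sets pairwise disjoint
and disjoint from the core. -/
def Hgraph (k l : ℕ) : Finset (Finset ℕ) :=
  ((((Finset.range l) ×ˢ (Finset.range l)).filter (fun p => p.1 < p.2))).image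
    (fun p => insert p.1 (insert p.2
      ((Finset.range (k - 2)).image (fun r => l + (p.1 * l + p.2) * (k - 2) + r))))

/-- The complete `k`-graph on `k+1` vertices, as a pattern on `ℕ`. -/
def Kpattern (k : ℕ) : Finset (Finset ℕ) := (Finset.range (k + 1)).powersetCard k

/-- The Turán number for a family of patterns `𝓕`: the maximum number of edges of a
`k`-uniform hypergraph on `n` vertices containing no member of `𝓕`. -/
noncomputable def exFam (k : ℕ) (F : Set (Finset (Finset ℕ))) (n : ℕ) : ℕ :=
  sSup {m | ∃ G : Finset (Finset (Fin n)), IsUniform k G ∧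
    (∀ H ∈ F, ¬ Contains H G) ∧ G.card = m}

/-- Two hypergraphs on `Fin n` are `m`-close: some relabelling of the vertices makes the
symmetric difference of the edge sets have at most `m` edges. -/
def Close {n : ℕ} (G H : Finset (Finset (Fin n))) (m : ℝ) : Prop :=
  ∃ σ : Fin n ≃ Fin n, (((symmDiff (G.image (fun e => e.image σ)) H)).card : ℝ) ≤ m

/-- A family `F` of patterns with Turán density `p` is `s`-stable. -/
def Stable (k s : ℕ) (F : Set (Finset (Finset ℕ))) (p : ℝ) : Prop :=
  ∀ ε : ℝ, 0 < ε → ∃ δ : ℝ, 0 < δ ∧ ∃ n₀ : ℕ, ∀ n ≥ n₀,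
    ∀ G : Fin (s + 1) → Finset (Finset (Fin n)),
      (∀ i, IsUniform k (G i) ∧ (∀ H ∈ F, ¬ Contains H (G i)) ∧
        (p - δ) * (n.choose k : ℝ) ≤ ((G i).card : ℝ)) →
      ∃ i j, i ≠ j ∧ Close (G i) (G j) (ε * (n.choose k : ℝ))

/-- The `t`-blowup of a pattern on `ℕ`: each vertex `v` is replaced by the `t` copies
`v*t, …, v*t+t-1`, and each edge by all choices of one copy of each of its vertices. -/
def blowupN (F : Finset (Finset ℕ)) (t : ℕ) : Finset (Finset ℕ) :=
  F.biUnion (fun e => (Finset.univ : Finset ({x // x ∈ e} → Fin t)).image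
    (fun f => e.attach.image (fun x : {y // y ∈ e} => x.1 * t + (f x).1)))


/-- if every pair of an `l`-set `L` lies in more than
`(l + (k-2)·C(l,2))·C(n,k-3)` edges of a `k`-uniform `G` on `n` vertices, then `G` contains a
copy of `H_l^(k)` with core `L`. -/

lemma count_one {n k : ℕ} (hk : 3 ≤ k) (G : Finset (Finset (Fin n)))
    (hG : ∀ e ∈ G, e.card = k) (x y v : Fin n) (hxy : x ≠ y) (hvx : v ≠ x) (hvy : v ≠ y) :
    (G.filter (fun e => x ∈ e ∧ y ∈ e ∧ v ∈ e)).card ≤ n.choose (k - 3) := by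
  calc (G.filter (fun e => x ∈ e ∧ y ∈ e ∧ v ∈ e)).card
      ≤ ((Finset.univ : Finset (Fin n)).powersetCard (k - 3)).card :=
        Finset.card_le_card_of_injOn (fun e => e \ {x, y, v}) ?_ ?_
    _ = n.choose (k - 3) := by simp
  · intro e he
    simp only [mem_coe, mem_filter] at he
    obtain ⟨heG, hx, hy, hv⟩ := he
    rw [mem_coe, mem_powersetCard]
    constructor
    · exact sdiff_subset.trans (subset_univ e) |>.trans (le_refl _)
    · rw [card_sdiff_of_subset (by intro z hz; simp at hz; rcases hz with h|h|h <;> subst h <;> assumption)]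
      rw [hG e heG]
      have : ({x, y, v} : Finset (Fin n)).card = 3 := by
        rw [card_insert_of_notMem (by simp [hxy, hvx.symm]),
          card_insert_of_notMem (by simp [hvy.symm])]
        simp
      rw [this]
  · intro e he f hf hef
    simp only [coe_filter, Set.mem_setOf_eq] at he hf
    simp only at hef
    have : e \ {x,y,v} ∪ {x,y,v} = f \ {x,y,v} ∪ {x,y,v} := by rw [hef]
    rwa [sdiff_union_of_subset, sdiff_union_of_subset] at this
    · intro z hz; simp at hz; rcases hz with h|h|h <;> subst h <;> tauto
    · intro z hz; simp at hz; rcases hz with h|h|h <;> subst h <;> tauto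

lemma count_bad {n k : ℕ} (hk : 3 ≤ k) (G : Finset (Finset (Fin n)))
    (hG : ∀ e ∈ G, e.card = k) (x y : Fin n) (hxy : x ≠ y) (T : Finset (Fin n)) :
    (G.filter (fun e => x ∈ e ∧ y ∈ e ∧ ¬ Disjoint (e \ {x, y}) T)).card
      ≤ T.card * n.choose (k - 3) := by
  have hsub : G.filter (fun e => x ∈ e ∧ y ∈ e ∧ ¬ Disjoint (e \ {x, y}) T)
      ⊆ (T \ {x, y}).biUnion (fun v => G.filter (fun e => x ∈ e ∧ y ∈ e ∧ v ∈ e)) := by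
    intro e he
    simp only [mem_filter] at he
    obtain ⟨heG, hx, hy, hnd⟩ := he
    rw [Finset.not_disjoint_iff] at hnd
    obtain ⟨v, hv1, hv2⟩ := hnd
    simp only [mem_sdiff] at hv1
    rw [mem_biUnion]
    exact ⟨v, by simp [hv2, hv1.2], by simp [heG, hx, hy, hv1.1]⟩
  calc _ ≤ _ := card_le_card hsub
    _ ≤ ∑ v ∈ T \ {x,y}, (G.filter (fun e => x ∈ e ∧ y ∈ e ∧ v ∈ e)).card :=
        card_biUnion_le
    _ ≤ ∑ v ∈ T \ {x,y}, n.choose (k - 3) := by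
        apply Finset.sum_le_sum
        intro v hv
        simp only [mem_sdiff, mem_insert, mem_singleton, not_or] at hv
        exact count_one hk G hG x y v hxy hv.2.1 hv.2.2
    _ = (T \ {x,y}).card * n.choose (k - 3) := by rw [Finset.sum_const, smul_eq_mul]
    _ ≤ T.card * n.choose (k - 3) := by
        exact Nat.mul_le_mul_right _ (card_le_card sdiff_subset)

lemma exists_good {n l k : ℕ} (hk : 3 ≤ k) (G : Finset (Finset (Fin n)))
    (hG : ∀ e ∈ G, e.card = k) (x y : Fin n) (hxy : x ≠ y) (T : Finset (Fin n))
    (hT : T.card ≤ l + (k - 2) * l.choose 2)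
    (hbig : (l + (k - 2) * l.choose 2) * n.choose (k - 3) <
      (G.filter (fun e => x ∈ e ∧ y ∈ e)).card) :
    ∃ e ∈ G, x ∈ e ∧ y ∈ e ∧ Disjoint (e \ {x, y}) T := by
  by_contra hcon
  push_neg at hcon
  have hsub : G.filter (fun e => x ∈ e ∧ y ∈ e)
      ⊆ G.filter (fun e => x ∈ e ∧ y ∈ e ∧ ¬ Disjoint (e \ {x, y}) T) := by
    intro e he
    simp only [mem_filter] at he ⊢
    exact ⟨he.1, he.2.1, he.2.2, hcon e he.1 he.2.1 he.2.2⟩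
  have := card_le_card hsub
  have h2 := count_bad hk G hG x y hxy T
  have h3 : T.card * n.choose (k - 3) ≤ (l + (k - 2) * l.choose 2) * n.choose (k - 3) :=
    Nat.mul_le_mul_right _ hT
  omega


lemma pairs_card {n : ℕ} (L : Finset (Fin n)) :
    ((L ×ˢ L).filter (fun p => p.1 < p.2)).card ≤ L.card.choose 2 := by
  calc ((L ×ˢ L).filter (fun p => p.1 < p.2)).card
      ≤ (L.powersetCard 2).card := by
        apply Finset.card_le_card_of_injOn (fun p => {p.1, p.2})
        · intro p hp
          simp only [mem_coe, mem_filter, mem_product] at hp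
          rw [mem_coe, mem_powersetCard]
          refine ⟨by intro z hz; simp at hz; rcases hz with h|h <;> subst h <;> tauto, ?_⟩
          rw [card_insert_of_notMem (by simp [hp.2.ne]), card_singleton]
        · intro p hp q hq hpq
          simp only [coe_filter, Set.mem_setOf_eq, mem_product] at hp hq
          simp only at hpq
          have h1 : p.1 ∈ ({q.1, q.2} : Finset (Fin n)) := by rw [← hpq]; simp
          have h2 : p.2 ∈ ({q.1, q.2} : Finset (Fin n)) := by rw [← hpq]; simp
          have h3 : q.1 ∈ ({p.1, p.2} : Finset (Fin n)) := by rw [hpq]; simp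
          simp only [mem_insert, mem_singleton] at h1 h2 h3
          have hp2 := hp.2
          have hq2 := hq.2
          have : p.1 = q.1 ∧ p.2 = q.2 := by
            rcases h1 with h1|h1 <;> rcases h2 with h2|h2 <;>
              first
              | exact ⟨h1, h2⟩
              | (exfalso; rcases h3 with h3|h3 <;> omega)
              | omega
          exact Prod.ext this.1 this.2
    _ = L.card.choose 2 := by rw [card_powersetCard]

lemma main_ind {n l k : ℕ} (hk : 3 ≤ k) (G : Finset (Finset (Fin n)))
    (hG : ∀ e ∈ G, e.card = k) (L : Finset (Fin n)) (hL : L.card = l)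
    (hdense : ∀ x ∈ L, ∀ y ∈ L, x ≠ y →
      (l + (k - 2) * l.choose 2) * n.choose (k - 3) <
        (G.filter (fun e => x ∈ e ∧ y ∈ e)).card)
    (Q : Finset (Fin n × Fin n)) :
    Q ⊆ (L ×ˢ L).filter (fun p => p.1 < p.2) →
    ∃ D : Fin n × Fin n → Finset (Fin n),
      ∀ p ∈ Q, D p ∈ G ∧ p.1 ∈ D p ∧ p.2 ∈ D p ∧ Disjoint (D p \ {p.1, p.2}) L ∧
        ∀ q ∈ Q, q ≠ p → Disjoint (D p \ {p.1, p.2}) (D q \ {q.1, q.2}) := by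
  induction Q using Finset.induction_on with
  | empty => intro _; exact ⟨fun _ => ∅, by simp⟩
  | @insert p Q hpQ ih =>
    intro hsub
    obtain ⟨D, hD⟩ := ih (fun q hq => hsub (mem_insert_of_mem hq))
    have hpmem : p ∈ (L ×ˢ L).filter (fun p => p.1 < p.2) := hsub (mem_insert_self p Q)
    simp only [mem_filter, mem_product] at hpmem
    obtain ⟨⟨hp1, hp2⟩, hplt⟩ := hpmem
    have hpne : p.1 ≠ p.2 := ne_of_lt hplt
    set T : Finset (Fin n) := L ∪ Q.biUnion (fun q => D q \ {q.1, q.2}) with hTdef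
    have hTcard : T.card ≤ l + (k - 2) * l.choose 2 := by
      calc T.card ≤ L.card + (Q.biUnion (fun q => D q \ {q.1, q.2})).card :=
            card_union_le _ _
        _ ≤ l + Q.card * (k - 2) := by
            rw [hL]
            refine Nat.add_le_add_left ?_ _
            calc (Q.biUnion (fun q => D q \ {q.1, q.2})).card
                ≤ ∑ q ∈ Q, (D q \ {q.1, q.2}).card := card_biUnion_le
              _ ≤ ∑ q ∈ Q, (k - 2) := by
                  apply sum_le_sum
                  intro q hq
                  obtain ⟨hqG, hq1, hq2, _, _⟩ := hD q hq
                  have hqne : q.1 ≠ q.2 := by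
                    have := hsub (mem_insert_of_mem hq)
                    simp only [mem_filter, mem_product] at this
                    exact ne_of_lt this.2
                  have hss : ({q.1, q.2} : Finset (Fin n)) ⊆ D q := by
                    intro z hz; simp at hz; rcases hz with h|h <;> subst h <;> assumption
                  rw [card_sdiff_of_subset hss]
                  rw [hG _ hqG, card_insert_of_notMem (by simp [hqne]), card_singleton]
              _ = Q.card * (k - 2) := by rw [sum_const, smul_eq_mul]
        _ ≤ l + (k - 2) * l.choose 2 := by
            have hQcard : Q.card < l.choose 2 := by
              have h1 : (insert p Q).card ≤ l.choose 2 := by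
                have := pairs_card L
                rw [hL] at this
                exact le_trans (card_le_card hsub) this
              rw [card_insert_of_notMem hpQ] at h1
              omega
            have h2 : Q.card * (k - 2) ≤ (k - 2) * l.choose 2 := by
              rw [mul_comm]
              exact Nat.mul_le_mul_left (k - 2) (Nat.le_of_lt hQcard)
            omega
    obtain ⟨e, heG, hex, hey, hed⟩ := exists_good hk G hG p.1 p.2 hpne T hTcard
      (hdense p.1 hp1 p.2 hp2 hpne)
    refine ⟨Function.update D p e, ?_⟩
    intro r hr
    rcases mem_insert.mp hr with hr' | hr'
    · subst hr'
      rw [Function.update_self]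
      refine ⟨heG, hex, hey, ?_, ?_⟩
      · exact Finset.disjoint_of_subset_right (subset_union_left) hed
      · intro q hq hqr
        have hqQ : q ∈ Q := by rcases mem_insert.mp hq with h | h; exact absurd h hqr; exact h
        rw [Function.update_of_ne (by rintro rfl; exact hpQ hqQ)]
        have hsub2 : D q \ {q.1, q.2} ⊆ T :=
          le_trans (subset_biUnion_of_mem (fun q => D q \ {q.1, q.2}) hqQ) subset_union_right
        exact Finset.disjoint_of_subset_right hsub2 hed
    · have hrp : r ≠ p := by rintro rfl; exact hpQ hr'
      rw [Function.update_of_ne hrp]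
      obtain ⟨h1, h2, h3, h4, h5⟩ := hD r hr'
      refine ⟨h1, h2, h3, h4, ?_⟩
      intro q hq hqr
      rcases mem_insert.mp hq with h | h
      · subst h
        rw [Function.update_self]
        have hsub2 : D r \ {r.1, r.2} ⊆ T :=
          le_trans (subset_biUnion_of_mem (fun q => D q \ {q.1, q.2}) hr') subset_union_right
        exact (Finset.disjoint_of_subset_right hsub2 hed).symm
      · rw [Function.update_of_ne (by rintro rfl; exact hpQ h)]
        exact h5 q h hqr

theorem stmt7 (n l k : ℕ) (hk : 3 ≤ k) (G : Finset (Finset (Fin n))) (hG : IsUniform k G)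
    (L : Finset (Fin n)) (hL : L.card = l)
    (hdense : ∀ x ∈ L, ∀ y ∈ L, x ≠ y →
      (l + (k - 2) * l.choose 2) * n.choose (k - 3) <
        (G.filter (fun e => x ∈ e ∧ y ∈ e)).card) :
    ∃ D : Fin n → Fin n → Finset (Fin n),
      (∀ x ∈ L, ∀ y ∈ L, x ≠ y →
        D x y ∈ G ∧ x ∈ D x y ∧ y ∈ D x y ∧ D x y = D y x ∧
          Disjoint (D x y \ {x, y}) L) ∧
      (∀ x ∈ L, ∀ y ∈ L, ∀ a ∈ L, ∀ b ∈ L, x ≠ y → a ≠ b →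
        ({x, y} : Finset (Fin n)) ≠ {a, b} →
        Disjoint (D x y \ {x, y}) (D a b \ {a, b})) := by
  obtain ⟨D₀, hD₀⟩ := main_ind hk G hG L hL hdense
    ((L ×ˢ L).filter (fun p => p.1 < p.2)) (Finset.Subset.refl _)
  set ord : Fin n → Fin n → Fin n × Fin n :=
    fun x y => if x < y then (x, y) else (y, x) with hord
  have hord_mem : ∀ x ∈ L, ∀ y ∈ L, x ≠ y →
      ord x y ∈ (L ×ˢ L).filter (fun p => p.1 < p.2) := by
    intro x hx y hy hxy
    rcases lt_or_gt_of_ne hxy with h | h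
    · simp [hord, h, mem_filter, hx, hy]
    · simp [hord, not_lt_of_gt h, h, mem_filter, hx, hy]
  have hord_pair : ∀ x y : Fin n, x ≠ y →
      ({(ord x y).1, (ord x y).2} : Finset (Fin n)) = {x, y} := by
    intro x y hxy
    rcases lt_or_gt_of_ne hxy with h | h
    · simp [hord, h]
    · simp [hord, not_lt_of_gt h, Finset.pair_comm]
  have hord_symm : ∀ x y : Fin n, x ≠ y → ord y x = ord x y := by
    intro x y hxy
    rcases lt_or_gt_of_ne hxy with h | h
    · simp [hord, h, not_lt_of_gt h]
    · simp [hord, h, not_lt_of_gt h]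
  have hord_fst : ∀ x y : Fin n, (ord x y).1 = x ∨ (ord x y).1 = y := by
    intro x y; by_cases h : x < y <;> simp [hord, h]
  have hord_snd : ∀ x y : Fin n, (ord x y).2 = x ∨ (ord x y).2 = y := by
    intro x y; by_cases h : x < y <;> simp [hord, h]
  refine ⟨fun x y => D₀ (ord x y), ?_, ?_⟩
  · intro x hx y hy hxy
    obtain ⟨h1, h2, h3, h4, _⟩ := hD₀ (ord x y) (hord_mem x hx y hy hxy)
    have hx' : x ∈ D₀ (ord x y) := by
      have hmx : x ∈ ({(ord x y).1, (ord x y).2} : Finset (Fin n)) := by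
        rw [hord_pair x y hxy]; simp
      simp only [mem_insert, mem_singleton] at hmx
      rcases hmx with h | h
      · rwa [← h] at h2
      · rwa [← h] at h3
    have hy' : y ∈ D₀ (ord x y) := by
      have hmy : y ∈ ({(ord x y).1, (ord x y).2} : Finset (Fin n)) := by
        rw [hord_pair x y hxy]; simp
      simp only [mem_insert, mem_singleton] at hmy
      rcases hmy with h | h
      · rwa [← h] at h2
      · rwa [← h] at h3
    refine ⟨h1, hx', hy', ?_, ?_⟩
    · show D₀ (ord x y) = D₀ (ord y x)
      rw [hord_symm x y hxy]
    rwa [hord_pair x y hxy] at h4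
  · intro x hx y hy a ha b hb hxy hab hne
    obtain ⟨_, _, _, _, h5⟩ := hD₀ (ord x y) (hord_mem x hx y hy hxy)
    have hpq : ord a b ≠ ord x y := by
      intro h
      apply hne
      rw [← hord_pair x y hxy, ← hord_pair a b hab, h]
    have := h5 (ord a b) (hord_mem a ha b hb hab) hpq
    rwa [hord_pair x y hxy, hord_pair a b hab] at this
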